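/- Any F₂-representation of Γ_Δ of dimension 2 on which the element c = a² acts without nonzero fixed vectors is isomorphic to the representation D given by ρ_D(a) = (0 1; 1 1), ρ_D(b) = (0 1; 1 0). -/

import Mathlib

/-- Relations for the binary dihedral group of order 12:
`Γ_Δ = ⟨a, b | a⁶ = 1, b² = a³, ab = ba⁻¹⟩`, generators `a = of 0`, `b = of 1`. -/
def gammaRels : Set (FreeGroup (Fin 2)) :=
  {FreeGroup.of 0 ^ 6,
   FreeGroup.of 1 ^ 2 * (FreeGroup.of 0 ^ 3)⁻¹,
   FreeGroup.of 0 * FreeGroup.of 1 * (FreeGroup.of 1 * (FreeGroup.of 0)⁻¹)⁻¹}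

theorem stmt12_relOne {α : Type*} {rels : Set (FreeGroup α)} {r : FreeGroup α} (h : r ∈ rels) :
    PresentedGroup.mk rels r = 1 :=
  (QuotientGroup.eq_one_iff r).mpr (Subgroup.subset_normalClosure h)

/-- Any 2-dimensional `F₂`-representation of `Γ_Δ` on which `c = a²` acts without
nonzero fixed vectors is isomorphic to `D`, given by `ρ_D(a) = (0 1; 1 1)`,
`ρ_D(b) = (0 1; 1 0)`. -/
theorem stmt_12 (V : Type) [AddCommGroup V] [Module (ZMod 2) V]
    (hdim : Module.finrank (ZMod 2) V = 2)
    (ρ : Representation (ZMod 2) (PresentedGroup gammaRels) V)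
    (hfree : ∀ v, ρ (PresentedGroup.of 0 ^ 2) v = v → v = 0) :
    ∃ e : V ≃ₗ[ZMod 2] (Fin 2 → ZMod 2),
      (∀ v, e (ρ (PresentedGroup.of 0) v) =
        Matrix.mulVecLin (!![0, 1; 1, 1] : Matrix (Fin 2) (Fin 2) (ZMod 2))
          (e v)) ∧
      (∀ v, e (ρ (PresentedGroup.of 1) v) =
        Matrix.mulVecLin (!![0, 1; 1, 0] : Matrix (Fin 2) (Fin 2) (ZMod 2))
          (e v)) := by
  classical
  -- group relations
  set a : PresentedGroup gammaRels := PresentedGroup.of 0 with ha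
  set b : PresentedGroup gammaRels := PresentedGroup.of 1 with hb
  have hmk : ∀ x : Fin 2, PresentedGroup.mk gammaRels (FreeGroup.of x) = PresentedGroup.of x :=
    fun _ => rfl
  have ha6 : a ^ 6 = 1 := by
    have := stmt12_relOne (show FreeGroup.of 0 ^ 6 ∈ gammaRels by left; rfl)
    rwa [map_pow, hmk] at this
  have hb2 : b ^ 2 = a ^ 3 := by
    have := stmt12_relOne (show FreeGroup.of 1 ^ 2 * (FreeGroup.of 0 ^ 3)⁻¹ ∈ gammaRels by
      right; left; rfl)
    rw [map_mul, map_inv, map_pow, map_pow, hmk, hmk] at this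
    exact mul_inv_eq_one.mp this
  have hab : a * b = b * a⁻¹ := by
    have := stmt12_relOne
      (show FreeGroup.of 0 * FreeGroup.of 1 * (FreeGroup.of 1 * (FreeGroup.of 0)⁻¹)⁻¹ ∈ gammaRels
        by right; right; rfl)
    rw [map_mul, map_inv, map_mul, map_mul, map_inv, hmk, hmk] at this
    exact mul_inv_eq_one.mp this
  have haba : a * b * a = b := by rw [hab]; group
  have hba : b * a = a⁻¹ * b := by rw [← haba]; simp [← mul_assoc]; exact haba
  -- operators
  set A : Module.End (ZMod 2) V := ρ a with hA
  set B : Module.End (ZMod 2) V := ρ b with hB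
  set A' : Module.End (ZMod 2) V := ρ a⁻¹ with hA'
  have hA6 : A ^ 6 = 1 := by rw [hA, ← map_pow, ha6, map_one]
  have hB2 : B ^ 2 = A ^ 3 := by rw [hA, hB, ← map_pow, ← map_pow, hb2]
  have hBA : B * A = A' * B := by rw [hA, hB, hA', ← map_mul, ← map_mul, hba]
  have hA'A : A' * A = 1 := by rw [hA, hA', ← map_mul, inv_mul_cancel, map_one]
  -- characteristic 2 facts
  have hchar : ∀ v : V, v + v = 0 := by
    intro v
    have h2 : ((2 : ZMod 2) : ZMod 2) • v = v + v := two_smul _ v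
    rw [show (2 : ZMod 2) = 0 by decide, zero_smul] at h2
    exact h2.symm
  have hE2 : (2 : Module.End (ZMod 2) V) = 0 := by
    apply LinearMap.ext; intro v
    rw [show (2 : Module.End (ZMod 2) V) = 1 + 1 from one_add_one_eq_two.symm]
    simp only [LinearMap.add_apply, Module.End.one_apply, LinearMap.zero_apply]
    exact hchar v
  have hcancel : ∀ s t : V, s + t = 0 → s = t := by
    intro s t h
    have : s + (t + t) = (s + t) + t := (add_assoc s t t).symm
    rw [hchar t, h, add_zero, zero_add] at this
    exact this
  -- fixed-point-freeness
  have hfree2 : ∀ v, A (A v) = v → v = 0 := by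
    intro v hv
    apply hfree v
    rw [map_pow]
    show ((ρ a) * (ρ a)) v = v
    rw [pow_two] at *
    exact hv
  have hAfix : ∀ x, A x = x → x = 0 := fun x hx => hfree2 x (by rw [hx, hx])
  have hAinj : ∀ x, A x = 0 → x = 0 := by
    intro x hx
    have : (A' * A) x = A' (A x) := rfl
    rw [hA'A, hx, map_zero] at this
    simpa using this
  have hpow2 : ∀ (f : Module.End (ZMod 2) V) x, (f ^ 2) x = f (f x) := by
    intro f x; rw [pow_two]; rfl
  -- c² + c + 1 = 0, i.e. A⁴ + A² + 1 = 0
  have hP : A ^ 4 + A ^ 2 + 1 = 0 := by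
    apply LinearMap.ext; intro v
    simp only [LinearMap.zero_apply]
    apply hfree2
    have key : (A ^ 2) * (A ^ 4 + A ^ 2 + 1) = (A ^ 4 + A ^ 2 + 1) + (A ^ 6 - 1) := by
      noncomm_ring
    rw [hA6, sub_self, add_zero] at key
    have step : ((A ^ 2 * (A ^ 4 + A ^ 2 + 1) : Module.End (ZMod 2) V)) v
        = ((A ^ 4 + A ^ 2 + 1 : Module.End (ZMod 2) V)) v := by rw [key]
    rw [Module.End.mul_apply, hpow2] at step
    exact step
  -- N = A² + A + 1 = 0
  set N : Module.End (ZMod 2) V := A ^ 2 + A + 1 with hNdef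
  have hN2 : N * N = 0 := by
    have expand : N * N = (A ^ 4 + A ^ 2 + 1) + 2 * (A ^ 3 + A ^ 2 + A) := by
      rw [hNdef]; noncomm_ring
    rw [expand, hP, hE2, zero_mul, add_zero]
  have hNA : N * A = A * N := by rw [hNdef]; noncomm_ring
  have hN : N = 0 := by
    by_contra hN0
    obtain ⟨v, hv⟩ : ∃ v, N v ≠ 0 := by
      by_contra hc
      push_neg at hc
      exact hN0 (LinearMap.ext hc)
    set w : V := N v with hw
    set u : V := A w with hu
    have hNw : N w = 0 := by
      rw [hw, ← Module.End.mul_apply, hN2, LinearMap.zero_apply]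
    have hNu : N u = 0 := by
      rw [hu, ← Module.End.mul_apply, hNA, Module.End.mul_apply, hNw, map_zero]
    have hw0 : w ≠ 0 := hv
    have hu0 : u ≠ 0 := fun h => hw0 (hAinj w h)
    have huw : u ≠ w := fun h => hw0 (hAfix w h)
    have hli : LinearIndependent (ZMod 2) ![w, u] := by
      rw [linearIndependent_fin2]
      constructor
      · simpa using hu0
      · intro x
        rcases (show x = 0 ∨ x = 1 by revert x; decide) with rfl | rfl
        · simpa using hw0.symm
        · simpa using huw
    have hcard : Fintype.card (Fin 2) = Module.finrank (ZMod 2) V := by simp [hdim]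
    set bas := basisOfLinearIndependentOfCardEqFinrank hli hcard with hbasdef
    have hbc : ⇑bas = ![w, u] := coe_basisOfLinearIndependentOfCardEqFinrank hli hcard
    apply hN0
    apply bas.ext
    intro i
    fin_cases i <;> simp [hbc, hNw, hNu]
  -- A³ = 1
  have hA3 : A ^ 3 = 1 := by
    have key : A ^ 3 - 1 = N * (A - 1) := by rw [hNdef]; noncomm_ring
    rw [hN, zero_mul] at key
    exact sub_eq_zero.mp key
  have hA'2 : A' = A ^ 2 := by
    calc A' = A' * (A * A ^ 2) := by
          rw [show A * A ^ 2 = A ^ 3 by noncomm_ring, hA3, mul_one]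
      _ = (A' * A) * A ^ 2 := by rw [mul_assoc]
      _ = A ^ 2 := by rw [hA'A, one_mul]
  have hB2' : B ^ 2 = 1 := by rw [hB2, hA3]
  have hBA' : B * A = A ^ 2 * B := by rw [hBA, hA'2]
  -- T = A²B is an involution
  have hBA2 : B * A ^ 2 = A ^ 4 * B := by
    have h1 : B * A ^ 2 = (B * A) * A := by noncomm_ring
    rw [h1, hBA', mul_assoc, hBA', ← mul_assoc]
    noncomm_ring
  have hTT : (A ^ 2 * B) * (A ^ 2 * B) = 1 := by
    calc (A ^ 2 * B) * (A ^ 2 * B) = A ^ 2 * (B * A ^ 2) * B := by noncomm_ring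
      _ = A ^ 2 * (A ^ 4 * B) * B := by rw [hBA2]
      _ = A ^ 6 * (B ^ 2) := by noncomm_ring
      _ = 1 := by rw [hA6, hB2', one_mul]
  -- find v ≠ 0 fixed by T
  have : Nontrivial V := Module.nontrivial_of_finrank_eq_succ hdim
  obtain ⟨v, hvne, hvT⟩ : ∃ v, v ≠ 0 ∧ (A ^ 2 * B) v = v := by
    by_cases hT : ∀ x, (A ^ 2 * B) x = x
    · obtain ⟨v0, hv0⟩ := exists_ne (0 : V)
      exact ⟨v0, hv0, hT v0⟩
    · push_neg at hT
      obtain ⟨x, hx⟩ := hT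
      refine ⟨x + (A ^ 2 * B) x, ?_, ?_⟩
      · intro h
        exact hx (hcancel _ _ h).symm
      · rw [map_add, ← Module.End.mul_apply ((A ^2) * B), hTT, Module.End.one_apply, add_comm]
  -- key pointwise facts
  have hvT' : A (A (B v)) = v := by
    have : (A ^ 2 * B) v = A (A (B v)) := by rw [Module.End.mul_apply, hpow2]
    rwa [this] at hvT
  have hBv : B v = A v := by
    have h3 : (A ^ 3) (B v) = A v := by
      have := congrArg A hvT'
      rw [show A (A (A (B v))) = (A ^ 3) (B v) by
        rw [pow_succ, Module.End.mul_apply, hpow2]] at this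
      exact this
    rwa [hA3, Module.End.one_apply] at h3
  have hBAv : B (A v) = v := by
    have : (B * A) v = (A ^ 2 * B) v := by rw [hBA']
    rw [Module.End.mul_apply] at this
    rw [this, hvT]
  have hA2v : A (A v) = A v + v := by
    have hNv : N v = 0 := by rw [hN]; rfl
    rw [hNdef] at hNv
    simp only [LinearMap.add_apply, Module.End.one_apply, hpow2] at hNv
    have := hcancel (A (A v)) (A v + v) (by rw [← add_assoc]; exact hNv)
    exact this
  -- basis {v, A v}
  have hAv0 : A v ≠ 0 := fun h => hvne (hAinj v h)
  have hAvv : A v ≠ v := fun h => hvne (hAfix v h)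
  have hli : LinearIndependent (ZMod 2) ![v, A v] := by
    rw [linearIndependent_fin2]
    constructor
    · simpa using hAv0
    · intro x
      rcases (show x = 0 ∨ x = 1 by revert x; decide) with rfl | rfl
      · simpa using hvne.symm
      · simpa using hAvv
  have hcard : Fintype.card (Fin 2) = Module.finrank (ZMod 2) V := by simp [hdim]
  set bas := basisOfLinearIndependentOfCardEqFinrank hli hcard with hbas
  have hbc : ⇑bas = ![v, A v] := coe_basisOfLinearIndependentOfCardEqFinrank hli hcard
  have hb0 : bas 0 = v := by rw [hbc]; rfl
  have hb1 : bas 1 = A v := by rw [hbc]; rfl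
  have he0 : bas.equivFun (bas 0) = ![1, 0] := by
    funext j; fin_cases j <;> simp [Module.Basis.equivFun_self]
  have he1 : bas.equivFun (bas 1) = ![0, 1] := by
    funext j; fin_cases j <;> simp [Module.Basis.equivFun_self]
  refine ⟨bas.equivFun, ?_, ?_⟩
  · intro x
    have key : (bas.equivFun.toLinearMap ∘ₗ A) =
        ((Matrix.mulVecLin (!![0, 1; 1, 1] : Matrix (Fin 2) (Fin 2) (ZMod 2))) ∘ₗ
          bas.equivFun.toLinearMap) := by
      apply bas.ext
      intro i
      fin_cases i
      · show bas.equivFun (A (bas 0)) =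
          Matrix.mulVecLin !![0, 1; 1, 1] (bas.equivFun (bas 0))
        rw [show A (bas 0) = bas 1 by rw [hb0, hb1], he1, he0]
        decide
      · show bas.equivFun (A (bas 1)) =
          Matrix.mulVecLin !![0, 1; 1, 1] (bas.equivFun (bas 1))
        rw [show A (bas 1) = bas 1 + bas 0 by rw [hb0, hb1, hA2v], map_add, he1, he0]
        decide
    exact LinearMap.congr_fun key x
  · intro x
    have key : (bas.equivFun.toLinearMap ∘ₗ B) =
        ((Matrix.mulVecLin (!![0, 1; 1, 0] : Matrix (Fin 2) (Fin 2) (ZMod 2))) ∘ₗ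
          bas.equivFun.toLinearMap) := by
      apply bas.ext
      intro i
      fin_cases i
      · show bas.equivFun (B (bas 0)) =
          Matrix.mulVecLin !![0, 1; 1, 0] (bas.equivFun (bas 0))
        rw [show B (bas 0) = bas 1 by rw [hb0, hb1]; exact hBv, he1, he0]
        decide
      · show bas.equivFun (B (bas 1)) =
          Matrix.mulVecLin !![0, 1; 1, 0] (bas.equivFun (bas 1))
        rw [show B (bas 1) = bas 0 by rw [hb0, hb1]; exact hBAv, he1, he0]
        decide
    exact LinearMap.congr_fun key x
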